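/- If a graph G is 3-Ramsey for K_3, then the chromatic number of G satisfies χ(G) ≥ 17. -/

import Mathlib

open SimpleGraph

/-- The vertex-disjoint union `K_n + K_m` of two complete graphs. -/
def cliqueSum (n m : ℕ) : SimpleGraph (Fin n ⊕ Fin m) :=
  SimpleGraph.fromRel fun x y =>
    (∃ a b, x = Sum.inl a ∧ y = Sum.inl b) ∨ (∃ a b, x = Sum.inr a ∧ y = Sum.inr b)

/-- There is a copy of `H` in `G` that is monochromatic in colour `i`
under the edge-colouring `c`. -/
def MonoCopy {V W : Type*} {r : ℕ} (G : SimpleGraph V) (H : SimpleGraph W)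
    (c : Sym2 V → Fin r) (i : Fin r) : Prop :=
  ∃ f : H →g G, Function.Injective f ∧ ∀ u v, H.Adj u v → c s(f u, f v) = i

/-- `G` is `r`-Ramsey for `H`: every `r`-colouring of the edges of `G`
admits a monochromatic copy of `H`. -/
def IsRamseyFor {V W : Type*} (r : ℕ) (G : SimpleGraph V) (H : SimpleGraph W) : Prop :=
  ∀ c : Sym2 V → Fin r, ∃ i : Fin r, MonoCopy G H c i

/-- `G₁` and `G₂` are `r`-Ramsey equivalent. -/
def RamseyEquiv {V W : Type*} (r : ℕ) (G₁ : SimpleGraph V) (G₂ : SimpleGraph W) : Prop :=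
  ∀ {U : Type*} (G : SimpleGraph U), IsRamseyFor r G G₁ ↔ IsRamseyFor r G G₂

/-- `N` has the Ramsey property for clique sizes `n : Fin r → ℕ`: every `r`-colouring of
the edges of `K_N` admits a colour `i` and an `i`-monochromatic clique of size `n i`. -/
def HasRamseyProp (N : ℕ) {r : ℕ} (n : Fin r → ℕ) : Prop :=
  ∀ c : Sym2 (Fin N) → Fin r, ∃ i : Fin r, ∃ s : Finset (Fin N),
    s.card = n i ∧ ∀ u ∈ s, ∀ v ∈ s, u ≠ v → c s(u, v) = i

/-- The Ramsey number `R_r(n 0, …, n (r-1))`. -/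
noncomputable def ramseyNumber {r : ℕ} (n : Fin r → ℕ) : ℕ :=
  sInf {N | HasRamseyProp N n}


def col : Fin 16 → Fin 3 := ![0,0,1,1,2,2,2,1,0,2,0,1,0,1,2,0]

def pc (u v : Fin 16) : Fin 3 :=
  col ⟨u.val ^^^ v.val, Nat.xor_lt_two_pow (n := 4) u.isLt v.isLt⟩

lemma pc_comm (u v : Fin 16) : pc u v = pc v u := by
  simp [pc, Nat.xor_comm]

lemma noMono : ∀ u v w : Fin 16, u ≠ v → v ≠ w → u ≠ w →
    ¬(pc u v = pc v w ∧ pc u v = pc u w) := by decide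

/-- If `G` is `3`-Ramsey for `K_3`, then `χ(G) ≥ 17`. -/
theorem stmt_8 {V : Type*} (G : SimpleGraph V)
    (hG : IsRamseyFor 3 G (completeGraph (Fin 3))) :
    (17 : ℕ∞) ≤ G.chromaticNumber := by
  by_contra h
  push_neg at h
  have h16 : G.chromaticNumber ≤ (16 : ℕ) := by
    exact Order.le_of_lt_add_one (h.trans_eq (by norm_num))
  obtain ⟨φ⟩ := (chromaticNumber_le_iff_colorable).mp h16
  set c : Sym2 V → Fin 3 :=
    Sym2.lift ⟨fun u v => pc (φ u) (φ v), fun u v => pc_comm _ _⟩ with hc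
  obtain ⟨i, f, hinj, hmono⟩ := hG c
  have adj : ∀ a b : Fin 3, a ≠ b → G.Adj (f a) (f b) := fun a b hab =>
    f.map_adj hab
  have hne : ∀ a b : Fin 3, a ≠ b → φ (f a) ≠ φ (f b) := fun a b hab =>
    φ.valid (adj a b hab)
  have key : ∀ a b : Fin 3, a ≠ b → pc (φ (f a)) (φ (f b)) = i := fun a b hab => by
    have := hmono a b hab
    simpa [hc] using this
  exact noMono (φ (f 0)) (φ (f 1)) (φ (f 2)) (hne 0 1 (by decide)) (hne 1 2 (by decide))
    (hne 0 2 (by decide))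
    ⟨(key 0 1 (by decide)).trans (key 1 2 (by decide)).symm,
     (key 0 1 (by decide)).trans (key 0 2 (by decide)).symm⟩
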